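/- For every fixed x ∈ ℝ^{d_x} and all y₁, y₂ ∈ ℝ^{d_y}, ‖v̂*(x,y₁) − v̂*(x,y₂)‖ ≤ (L_{f,1}/μ + C_{f_y}L_{g,2}/μ²)·‖y₁ − y₂‖; that is, y ↦ v̂*(x,y) is Lipschitz with constant L̄_v := L_{f,1}/μ + C_{f_y}L_{g,2}/μ². -/

import Mathlib

noncomputable section

open scoped RealInnerProductSpace

variable {dx dy : ℕ}

/-- Partial gradient in the first argument. -/
def gX (f : EuclideanSpace ℝ (Fin dx) → EuclideanSpace ℝ (Fin dy) → ℝ)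
    (x : EuclideanSpace ℝ (Fin dx)) (y : EuclideanSpace ℝ (Fin dy)) :
    EuclideanSpace ℝ (Fin dx) :=
  gradient (fun x' => f x' y) x

/-- Partial gradient in the second argument. -/
def gY (f : EuclideanSpace ℝ (Fin dx) → EuclideanSpace ℝ (Fin dy) → ℝ)
    (x : EuclideanSpace ℝ (Fin dx)) (y : EuclideanSpace ℝ (Fin dy)) :
    EuclideanSpace ℝ (Fin dy) :=
  gradient (fun y' => f x y') y

/-- Second derivative `∇_y∇_y g (x,y)` as a linear map `ℝ^{d_y} → ℝ^{d_y}`. -/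
def gYY (g : EuclideanSpace ℝ (Fin dx) → EuclideanSpace ℝ (Fin dy) → ℝ)
    (x : EuclideanSpace ℝ (Fin dx)) (y : EuclideanSpace ℝ (Fin dy)) :
    EuclideanSpace ℝ (Fin dy) →L[ℝ] EuclideanSpace ℝ (Fin dy) :=
  fderiv ℝ (fun y' => gY g x y') y

open Filter in
lemma mono_deriv_nonneg' {u : ℝ → ℝ} {c t : ℝ} (hm : Monotone u) (h : HasDerivAt u c t) : 0 ≤ c := by
  have h1 : Filter.Tendsto (slope u t) (nhdsWithin t (Set.Ioi t)) (nhds c) := by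
    have := hasDerivWithinAt_iff_tendsto_slope.mp (h.hasDerivWithinAt (s := Set.Ioi t))
    rwa [Set.diff_singleton_eq_self (by simp)] at this
  refine ge_of_tendsto h1 (eventually_nhdsWithin_of_forall fun r hr => ?_)
  have hr' : t < r := hr
  have : u t ≤ u r := hm hr'.le
  rw [slope_def_field]
  exact div_nonneg (by linarith) (by linarith)

lemma gYY_coercive (g : EuclideanSpace ℝ (Fin dx) → EuclideanSpace ℝ (Fin dy) → ℝ)
    (hg : ContDiff ℝ 2 (Function.uncurry g)) {μ : ℝ}
    (x : EuclideanSpace ℝ (Fin dx))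
    (hsc : StrongConvexOn Set.univ μ (fun y => g x y))
    (y w : EuclideanSpace ℝ (Fin dy)) :
    μ * ‖w‖ ^ 2 ≤ ⟪gYY g x y w, w⟫ := by
  set G : EuclideanSpace ℝ (Fin dy) → ℝ := fun y' => g x y' with hGdef
  have hG : ContDiff ℝ 2 G := by exact hg.comp (ContDiff.prodMk (contDiff_const (c := x)) contDiff_id)
  set gradG : EuclideanSpace ℝ (Fin dy) → EuclideanSpace ℝ (Fin dy) := fun p => gradient G p with hgradGdef
  have hgradG : ContDiff ℝ 1 gradG := by
    have h1 : ContDiff ℝ 1 (fun p => fderiv ℝ G p) := hG.fderiv_right (by norm_num)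
    exact ((InnerProductSpace.toDual ℝ (EuclideanSpace ℝ (Fin dy))).symm.contDiff).comp h1
  have hd : Differentiable ℝ gradG := hgradG.differentiable one_ne_zero
  set H : EuclideanSpace ℝ (Fin dy) →L[ℝ] EuclideanSpace ℝ (Fin dy) := gYY g x y with hHdef
  have hH : HasFDerivAt gradG H y := (hd y).hasFDerivAt
  have hline : ∀ t : ℝ, HasDerivAt (fun s : ℝ => y + s • w) w t := fun t => by
    simpa using ((hasDerivAt_id t).smul_const w).const_add y
  -- derivative of θ
  set ρ : ℝ → ℝ := fun t => ⟪gradG (y + t • w), w⟫ - μ * ‖w‖ ^ 2 * t with hρdef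
  set θ : ℝ → ℝ := fun t => G (y + t • w) - μ / 2 * (‖w‖ ^ 2 * t ^ 2) with hθdef
  have hθ' : ∀ t : ℝ, HasDerivAt θ (ρ t) t := by
    intro t
    have h1 : HasDerivAt (fun s : ℝ => G (y + s • w)) ⟪gradG (y + t • w), w⟫ t := by
      have hgrad : HasGradientAt G (gradG (y + t • w)) (y + t • w) :=
        (hG.differentiable (by norm_num) (y + t • w)).hasGradientAt
      have := hgrad.hasFDerivAt.comp_hasDerivAt t (hline t)
      exact this
    have h2 : HasDerivAt (fun s : ℝ => μ / 2 * (‖w‖ ^ 2 * s ^ 2)) (μ * ‖w‖ ^ 2 * t) t := by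
      have := ((hasDerivAt_pow 2 t).const_mul (‖w‖ ^ 2)).const_mul (μ / 2)
      refine this.congr_deriv ?_
      ring
    exact h1.sub h2
  -- convexity of θ
  have hθconv : ConvexOn ℝ Set.univ θ := by
    have hc1 : ConvexOn ℝ Set.univ (fun z : EuclideanSpace ℝ (Fin dy) => g x z - μ / 2 * ‖z‖ ^ 2) :=
      strongConvexOn_iff_convex.mp hsc
    set A : ℝ →ᵃ[ℝ] EuclideanSpace ℝ (Fin dy) := AffineMap.lineMap y (y + w) with hAdef
    have hA : ∀ t : ℝ, A t = y + t • w := by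
      intro t; simp [hAdef, AffineMap.lineMap_apply]; abel
    have hc2 := hc1.comp_affineMap A
    have hc2' : ConvexOn ℝ Set.univ ((fun z : EuclideanSpace ℝ (Fin dy) => g x z - μ / 2 * ‖z‖ ^ 2) ∘ A) := by
      simpa using hc2
    have haff : ConvexOn ℝ Set.univ (fun t : ℝ => μ / 2 * ‖y‖ ^ 2 + μ * ⟪y, w⟫ * t) := by
      refine ⟨convex_univ, fun p _ q _ α β hα hβ hαβ => ?_⟩
      simp only [smul_eq_mul]
      have : α * (μ / 2 * ‖y‖ ^ 2 + μ * ⟪y, w⟫ * p) + β * (μ / 2 * ‖y‖ ^ 2 + μ * ⟪y, w⟫ * q)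
          = μ / 2 * ‖y‖ ^ 2 + μ * ⟪y, w⟫ * (α * p + β * q) := by
        linear_combination (μ / 2 * ‖y‖ ^ 2) * hαβ
      linarith [this.le]
    have heq : θ = fun t : ℝ =>
        ((fun z : EuclideanSpace ℝ (Fin dy) => g x z - μ / 2 * ‖z‖ ^ 2) ∘ A) t + (μ / 2 * ‖y‖ ^ 2 + μ * ⟪y, w⟫ * t) := by
      funext t
      simp only [hθdef, Function.comp_apply, hA, hGdef]
      have hns : ‖y + t • w‖ ^ 2 = ‖y‖ ^ 2 + 2 * (t * ⟪y, w⟫) + t ^ 2 * ‖w‖ ^ 2 := by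
        rw [norm_add_sq_real, real_inner_smul_right, norm_smul]
        simp [mul_pow]
        try ring
      rw [hns]; ring
    rw [heq]
    exact hc2'.add haff
  have hmono : Monotone ρ := by
    have hmOn : MonotoneOn (deriv θ) Set.univ :=
      hθconv.monotoneOn_deriv (fun p _ => (hθ' p).differentiableAt)
    have : deriv θ = ρ := funext fun t => (hθ' t).deriv
    rw [this] at hmOn
    exact monotoneOn_univ.mp hmOn
  -- derivative of ρ at 0
  have hψ' : HasDerivAt (fun t : ℝ => gradG (y + t • w)) (H w) 0 := by
    have hH0 : HasFDerivAt gradG H (y + (0 : ℝ) • w) := by simpa using hH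
    exact hH0.comp_hasDerivAt 0 (hline 0)
  have hρ' : HasDerivAt ρ (⟪H w, w⟫ - μ * ‖w‖ ^ 2) 0 := by
    have h1 := hψ'.inner ℝ (hasDerivAt_const (0 : ℝ) w)
    have h2 : HasDerivAt (fun t : ℝ => μ * ‖w‖ ^ 2 * t) (μ * ‖w‖ ^ 2) 0 := by
      simpa using (hasDerivAt_id (0 : ℝ)).const_mul (μ * ‖w‖ ^ 2)
    have := h1.sub h2
    exact this.congr_deriv (by simp)
  have := mono_deriv_nonneg' hmono hρ'
  linarith

/-- `y ↦ v̂*(x,y)` is Lipschitz with constant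
`L̄_v := L_{f,1}/μ + C_{f_y} L_{g,2}/μ²`. -/
theorem vhat_lipschitz_in_y
    (f g : EuclideanSpace ℝ (Fin dx) → EuclideanSpace ℝ (Fin dy) → ℝ)
    (hf : ContDiff ℝ 2 (Function.uncurry f)) (hg : ContDiff ℝ 2 (Function.uncurry g))
    (μ Lf1 Lg2 Cfy : ℝ) (hμ : 0 < μ)
    (hsc : ∀ x, StrongConvexOn Set.univ μ (fun y => g x y))
    (hfx_lip : ∀ x₁ y₁ x₂ y₂, ‖gX f x₁ y₁ - gX f x₂ y₂‖ ≤ Lf1 * (‖x₁ - x₂‖ + ‖y₁ - y₂‖))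
    (hfy_lip : ∀ x₁ y₁ x₂ y₂, ‖gY f x₁ y₁ - gY f x₂ y₂‖ ≤ Lf1 * (‖x₁ - x₂‖ + ‖y₁ - y₂‖))
    (hgyy_lip : ∀ x₁ y₁ x₂ y₂, ‖gYY g x₁ y₁ - gYY g x₂ y₂‖ ≤ Lg2 * (‖x₁ - x₂‖ + ‖y₁ - y₂‖))
    (hfy_bd : ∀ x y, ‖gY f x y‖ ≤ Cfy)
    (vhat : EuclideanSpace ℝ (Fin dx) → EuclideanSpace ℝ (Fin dy) → EuclideanSpace ℝ (Fin dy))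
    (hvhat : ∀ x y, gYY g x y (vhat x y) = gY f x y) :
    ∀ x y₁ y₂, ‖vhat x y₁ - vhat x y₂‖ ≤ (Lf1 / μ + Cfy * Lg2 / μ ^ 2) * ‖y₁ - y₂‖ := by
  intro x y₁ y₂
  have hco := fun (y w : EuclideanSpace ℝ (Fin dy)) => gYY_coercive g hg x (hsc x) y w
  set v₁ := vhat x y₁ with hv₁
  set v₂ := vhat x y₂ with hv₂
  set w := v₁ - v₂ with hw
  have hCfy : 0 ≤ Cfy := (norm_nonneg _).trans (hfy_bd x y₂)
  -- bound on ‖v₂‖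
  have hv2 : ‖v₂‖ ≤ Cfy / μ := by
    have h1 : μ * ‖v₂‖ ^ 2 ≤ ⟪gY f x y₂, v₂⟫ := by
      have := hco y₂ v₂; rwa [hvhat] at this
    have h2 : ⟪gY f x y₂, v₂⟫ ≤ Cfy * ‖v₂‖ :=
      (real_inner_le_norm _ _).trans
        (mul_le_mul_of_nonneg_right (hfy_bd x y₂) (norm_nonneg _))
    rcases eq_or_lt_of_le (norm_nonneg v₂) with h0 | h0
    · rw [← h0]; positivity
    · rw [le_div_iff₀ hμ]; nlinarith
  by_cases hyy : y₁ = y₂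
  · subst hyy
    have h0 : gYY g x y₁ w = 0 := by
      rw [hw, map_sub, hvhat]
      simp [hv₂]
    have h1 : μ * ‖w‖ ^ 2 ≤ 0 := by
      have := hco y₁ w; rw [h0] at this; simpa using this
    have h2 : ‖w‖ = 0 := by
      by_contra hne
      have hpos : 0 < ‖w‖ := lt_of_le_of_ne (norm_nonneg w) (Ne.symm hne)
      nlinarith [mul_pos hμ (mul_pos hpos hpos)]
    simp [h2]
  · have hne : 0 < ‖y₁ - y₂‖ := by
      rw [norm_pos_iff]; exact sub_ne_zero.mpr hyy
    have hxx : ‖x - x‖ = 0 := by simp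
    have hLf1 : 0 ≤ Lf1 := by
      have h := hfy_lip x y₁ x y₂
      rw [hxx, zero_add] at h
      nlinarith [norm_nonneg (gY f x y₁ - gY f x y₂)]
    have hLg2 : 0 ≤ Lg2 := by
      have h := hgyy_lip x y₁ x y₂
      rw [hxx, zero_add] at h
      nlinarith [norm_nonneg (gYY g x y₁ - gYY g x y₂)]
    have hHw : gYY g x y₁ w = (gY f x y₁ - gY f x y₂) + (gYY g x y₂ - gYY g x y₁) v₂ := by
      rw [hw, map_sub, hvhat, ContinuousLinearMap.sub_apply, hvhat]
      abel
    have hnorm : ‖gYY g x y₁ w‖ ≤ Lf1 * ‖y₁ - y₂‖ + Lg2 * ‖y₁ - y₂‖ * ‖v₂‖ := by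
      rw [hHw]
      refine (norm_add_le _ _).trans (add_le_add ?_ ?_)
      · have := hfy_lip x y₁ x y₂; rwa [hxx, zero_add] at this
      · refine ((gYY g x y₂ - gYY g x y₁).le_opNorm v₂).trans ?_
        have h := hgyy_lip x y₂ x y₁
        rw [hxx, zero_add, norm_sub_rev y₂ y₁] at h
        exact mul_le_mul_of_nonneg_right h (norm_nonneg _)
    have hmain : μ * ‖w‖ ^ 2 ≤ (Lf1 * ‖y₁ - y₂‖ + Lg2 * ‖y₁ - y₂‖ * ‖v₂‖) * ‖w‖ :=
      (hco y₁ w).trans ((real_inner_le_norm _ _).trans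
        (mul_le_mul_of_nonneg_right hnorm (norm_nonneg _)))
    rcases eq_or_lt_of_le (norm_nonneg w) with h0 | h0
    · rw [← h0]
      have : 0 ≤ (Lf1 / μ + Cfy * Lg2 / μ ^ 2) := by positivity
      positivity
    · have h3 : μ * ‖w‖ ≤ Lf1 * ‖y₁ - y₂‖ + Lg2 * ‖y₁ - y₂‖ * (Cfy / μ) := by
        have hcancel : μ * ‖w‖ ≤ Lf1 * ‖y₁ - y₂‖ + Lg2 * ‖y₁ - y₂‖ * ‖v₂‖ := by
          nlinarith
        have : Lg2 * ‖y₁ - y₂‖ * ‖v₂‖ ≤ Lg2 * ‖y₁ - y₂‖ * (Cfy / μ) :=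
          mul_le_mul_of_nonneg_left hv2 (by positivity)
        linarith
      have heq : (Lf1 / μ + Cfy * Lg2 / μ ^ 2) * ‖y₁ - y₂‖
          = (Lf1 * ‖y₁ - y₂‖ + Lg2 * ‖y₁ - y₂‖ * (Cfy / μ)) / μ := by
        field_simp
      rw [heq, le_div_iff₀ hμ]
      linarith
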